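/- A functor f : C → D between small categories is fully faithful if and only if the right Kan extension functor f_* : PSh(C) → PSh(D) is fully faithful. -/

import Mathlib

open CategoryTheory

/-- A functor `f : C ⥤ D` between small categories is fully faithful if and only if the
right Kan extension functor `f_* : PSh(C) ⥤ PSh(D)` on presheaf categories is fully
faithful. -/
theorem stmt_4 {C : Type u} [SmallCategory C] {D : Type u} [SmallCategory D]
    (f : C ⥤ D) :
    (f.Full ∧ f.Faithful) ↔
      ((f.op.ran : (Cᵒᵖ ⥤ Type u) ⥤ (Dᵒᵖ ⥤ Type u)).Full ∧
        (f.op.ran : (Cᵒᵖ ⥤ Type u) ⥤ (Dᵒᵖ ⥤ Type u)).Faithful) := by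
  constructor
  · rintro ⟨hfull, hfaith⟩
    haveI : f.op.Full := inferInstance
    haveI : f.op.Faithful := inferInstance
    haveI : IsIso (f.op.ranAdjunction (Type u)).counit := inferInstance
    exact ⟨(f.op.ranAdjunction (Type u)).fullyFaithfulROfIsIsoCounit.full,
      (f.op.ranAdjunction (Type u)).fullyFaithfulROfIsIsoCounit.faithful⟩
  · rintro ⟨hfull, hfaith⟩
    have hran : (f.op.ran : (Cᵒᵖ ⥤ Type u) ⥤ (Dᵒᵖ ⥤ Type u)).FullyFaithful :=
      Functor.FullyFaithful.ofFullyFaithful _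
    have hlan : (f.op.lan : (Cᵒᵖ ⥤ Type u) ⥤ (Dᵒᵖ ⥤ Type u)).FullyFaithful :=
      (Adjunction.Triple.mk (f.op.lanAdjunction (Type u))
        (f.op.ranAdjunction (Type u))).fullyFaithfulEquiv.symm hran
    haveI := hlan.full
    haveI := hlan.faithful
    have e : f ⋙ yoneda ≅ yoneda ⋙ (f.op.lan : (Cᵒᵖ ⥤ Type u) ⥤ (Dᵒᵖ ⥤ Type u)) :=
      Functor.isoWhiskerLeft f uliftYonedaIsoYoneda.{u}.symm ≪≫
        Presheaf.compULiftYonedaIsoULiftYonedaCompLan.{u} f ≪≫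
        Functor.isoWhiskerRight uliftYonedaIsoYoneda.{u} _
    haveI : (f ⋙ yoneda).Full := Functor.Full.of_iso e.symm
    haveI : (f ⋙ yoneda).Faithful := Functor.Faithful.of_iso e.symm
    exact ⟨Functor.Full.of_comp_faithful f yoneda, Functor.Faithful.of_comp f yoneda⟩
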